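/- Let B be a reflexive real Banach space whose norm is strictly convex, let I, J : B → ℝ be continuously Fréchet differentiable functionals, and let u ∈ B satisfy J(u) = 1. Assume u is not a critical point of I with respect to S := {v ∈ B | J(v) = 1}, i.e. there is no α ∈ ℝ with I'(u) = α J'(u). Then the problem of minimizing the linear functional w ↦ ⟨I'(u), w⟩ over the set C := {v ∈ B | ⟨J'(u), v⟩ = 0 and ‖v‖ = 1} has a unique solution. -/

import Mathlib

open NormedSpace Metric

/-- If φ is not a scalar multiple of ψ, there is v in ker ψ with φ v < 0. -/
lemma aux_exists_neg {B : Type*} [NormedAddCommGroup B] [NormedSpace ℝ B]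
    (φ ψ : B →L[ℝ] ℝ) (h : ¬ ∃ α : ℝ, φ = α • ψ) :
    ∃ v : B, ψ v = 0 ∧ φ v < 0 := by
  have hne : ∃ v : B, ψ v = 0 ∧ φ v ≠ 0 := by
    by_contra hc
    push_neg at hc
    apply h
    by_cases hψ : ψ = 0
    · refine ⟨0, ?_⟩
      ext x
      simpa using hc x (by simp [hψ])
    · obtain ⟨z, hz⟩ : ∃ z, ψ z ≠ 0 := by
        by_contra hz; push_neg at hz; exact hψ (by ext x; simp [hz])
      set z' := (ψ z)⁻¹ • z with hz'
      have hψz' : ψ z' = 1 := by simp [hz', inv_mul_cancel₀ hz]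
      refine ⟨φ z', ?_⟩
      ext x
      have : ψ (x - ψ x • z') = 0 := by simp [hψz']
      have h0 := hc _ this
      simp only [map_sub, map_smul, smul_eq_mul, sub_eq_zero] at h0
      simp [h0, mul_comm]
  obtain ⟨v, hv0, hvne⟩ := hne
  rcases lt_or_gt_of_ne hvne with h1 | h1
  · exact ⟨v, hv0, h1⟩
  · exact ⟨-v, by simp [hv0], by simpa using neg_neg_iff_pos.mpr h1⟩

/-- Existence of a minimizer of φ on the intersection of ker ψ and the closed unit ball,
in a reflexive space. -/
lemma aux_exists_min {B : Type*} [NormedAddCommGroup B] [NormedSpace ℝ B]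
    (hrefl : Function.Surjective (inclusionInDoubleDual ℝ B))
    (φ ψ : B →L[ℝ] ℝ) :
    ∃ w₀ : B, ψ w₀ = 0 ∧ ‖w₀‖ ≤ 1 ∧ ∀ v : B, ψ v = 0 → ‖v‖ ≤ 1 → φ w₀ ≤ φ v := by
  set K : Set (WeakDual ℝ (StrongDual ℝ B)) :=
    (WeakDual.toStrongDual ⁻¹' closedBall 0 1) ∩ {F | F ψ = 0} with hK
  have hcomp : IsCompact K :=
    (WeakDual.isCompact_closedBall (0 : StrongDual ℝ (StrongDual ℝ B)) 1).inter_right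
      (isClosed_eq (WeakDual.eval_continuous ψ) continuous_const)
  have hne : K.Nonempty := ⟨0, by simp [hK], rfl⟩
  obtain ⟨F₀, hF₀mem, hF₀min⟩ :=
    hcomp.exists_isMinOn hne ((WeakDual.eval_continuous φ).continuousOn)
  obtain ⟨w₀, hw₀⟩ := hrefl (WeakDual.toStrongDual F₀)
  have hnorm : ∀ x : B, ‖inclusionInDoubleDual ℝ B x‖ = ‖x‖ := fun x =>
    (inclusionInDoubleDualLi ℝ (E := B)).norm_map x
  have hval : ∀ (x : B) (f : StrongDual ℝ B), inclusionInDoubleDual ℝ B x f = f x := fun x f => rfl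
  have hψ0 : ψ w₀ = 0 := by
    have := congrArg (fun F => F ψ) hw₀
    simp only [hval] at this
    rw [this]
    exact hF₀mem.2
  have hn : ‖w₀‖ ≤ 1 := by
    have h1 : ‖WeakDual.toStrongDual F₀‖ ≤ 1 := by
      exact (dist_zero_right (WeakDual.toStrongDual F₀)).symm.le.trans hF₀mem.1
    rw [← hnorm, hw₀]; exact h1
  refine ⟨w₀, hψ0, hn, fun v hv1 hv2 => ?_⟩
  have hvmem : (StrongDual.toWeakDual (inclusionInDoubleDual ℝ B v)) ∈ K := by
    constructor
    · simp only [Set.mem_preimage, mem_closedBall, dist_zero_right]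
      exact (dist_zero_right (inclusionInDoubleDual ℝ B v)).le.trans (by rw [hnorm v]; exact hv2)
    · show inclusionInDoubleDual ℝ B v ψ = 0
      rw [hval]; exact hv1
  have := hF₀min hvmem
  have heq : F₀ φ = φ w₀ := by
    have := congrArg (fun F => F φ) hw₀
    simp only [hval] at this
    exact this.symm
  simpa [heq, hval] using this

/-- Existence and uniqueness of the minimizer of `w ↦ ⟨I'(u), w⟩`
over `C = {v | ⟨J'(u), v⟩ = 0 ∧ ‖v‖ = 1}` in a reflexive Banach space with a
strictly convex norm, provided `u ∈ S = {J = 1}` is not a critical point of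
`I` with respect to `S`. -/
theorem stmt_0 {B : Type*} [NormedAddCommGroup B] [NormedSpace ℝ B] [CompleteSpace B]
    (hrefl : Function.Surjective (NormedSpace.inclusionInDoubleDual ℝ B))
    (hconv : ∀ w₁ w₂ : B, w₁ ≠ w₂ → ‖w₁‖ = 1 → ‖w₂‖ = 1 → ‖(1 / 2 : ℝ) • (w₁ + w₂)‖ < 1)
    (I J : B → ℝ) (hI : ContDiff ℝ 1 I) (hJ : ContDiff ℝ 1 J)
    (u : B) (hu : J u = 1)
    (hcrit : ¬ ∃ α : ℝ, fderiv ℝ I u = α • fderiv ℝ J u) :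
    ∃! w : B, (fderiv ℝ J u w = 0 ∧ ‖w‖ = 1) ∧
      ∀ v : B, (fderiv ℝ J u v = 0 ∧ ‖v‖ = 1) → fderiv ℝ I u w ≤ fderiv ℝ I u v := by
  set φ := fderiv ℝ I u
  set ψ := fderiv ℝ J u
  obtain ⟨v₀, hv₀0, hv₀neg⟩ := aux_exists_neg φ ψ hcrit
  obtain ⟨w₀, hw₀ψ, hw₀n, hw₀min⟩ := aux_exists_min hrefl φ ψ
  have hv₀ne : v₀ ≠ 0 := fun h => by simp [h] at hv₀neg
  have hv₀pos : (0 : ℝ) < ‖v₀‖ := norm_pos_iff.mpr hv₀ne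
  -- the minimum value is negative
  have hmneg : φ w₀ < 0 := by
    have h1 : φ w₀ ≤ φ (‖v₀‖⁻¹ • v₀) := by
      refine hw₀min _ (by simp [hv₀0]) ?_
      rw [norm_smul, norm_inv, norm_norm, inv_mul_cancel₀ hv₀pos.ne']
    have h2 : φ (‖v₀‖⁻¹ • v₀) < 0 := by
      rw [map_smul, smul_eq_mul]
      exact mul_neg_of_pos_of_neg (inv_pos.mpr hv₀pos) hv₀neg
    linarith
  have hw₀ne : ‖w₀‖ ≠ 0 := fun h => by
    rw [norm_eq_zero] at h; simp [h] at hmneg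
  have hw₀pos : (0 : ℝ) < ‖w₀‖ := (norm_nonneg w₀).lt_of_ne' hw₀ne
  -- the minimizer has norm 1
  have hw₀norm : ‖w₀‖ = 1 := by
    by_contra hne
    have hlt : ‖w₀‖ < 1 := lt_of_le_of_ne hw₀n hne
    have h1 : φ w₀ ≤ φ (‖w₀‖⁻¹ • w₀) := by
      refine hw₀min _ (by simp [hw₀ψ]) ?_
      rw [norm_smul, norm_inv, norm_norm, inv_mul_cancel₀ hw₀ne]
    rw [map_smul, smul_eq_mul] at h1
    have hinv : (1 : ℝ) < ‖w₀‖⁻¹ := one_lt_inv₀ hw₀pos |>.mpr hlt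
    nlinarith
  -- scaling argument used in uniqueness
  have key : ∀ w : B, (ψ w = 0 ∧ ‖w‖ = 1) →
      (∀ v : B, (ψ v = 0 ∧ ‖v‖ = 1) → φ w ≤ φ v) → w = w₀ := by
    intro w ⟨hwψ, hwn⟩ hwmin
    have heq : φ w = φ w₀ := le_antisymm
      (hwmin w₀ ⟨hw₀ψ, hw₀norm⟩) (hw₀min w hwψ (le_of_eq hwn))
    by_contra hne
    set z := (1 / 2 : ℝ) • (w + w₀) with hz
    have hzn : ‖z‖ < 1 := hconv w w₀ hne hwn hw₀norm
    have hzψ : ψ z = 0 := by simp [hz, hwψ, hw₀ψ]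
    have hzφ : φ z = φ w₀ := by
      simp only [hz, map_smul, map_add, smul_eq_mul, heq]; ring
    have hzne : ‖z‖ ≠ 0 := fun h => by
      rw [norm_eq_zero] at h; rw [h] at hzφ; simp at hzφ; rw [← hzφ] at hmneg; simp at hmneg
    have hzpos : (0 : ℝ) < ‖z‖ := (norm_nonneg z).lt_of_ne' hzne
    have h1 : φ w ≤ φ (‖z‖⁻¹ • z) := by
      refine hwmin _ ⟨by simp [hzψ], ?_⟩
      rw [norm_smul, norm_inv, norm_norm, inv_mul_cancel₀ hzne]
    rw [map_smul, smul_eq_mul, hzφ] at h1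
    rw [heq] at h1
    have hinv : (1 : ℝ) < ‖z‖⁻¹ := (one_lt_inv₀ hzpos).mpr hzn
    nlinarith
  refine ⟨w₀, ⟨⟨hw₀ψ, hw₀norm⟩, fun v ⟨hv1, hv2⟩ => hw₀min v hv1 (le_of_eq hv2)⟩, ?_⟩
  rintro w ⟨hw1, hw2⟩
  exact key w hw1 hw2
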